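/- Let N(τ) = N/N_τ for a cone τ in a stacky fan, with link(τ) having rays ρ_1,…,ρ_ℓ, and suppose for each ray ρ_i ⊆ τ an element θ_i ∈ N^⋆ is chosen with θ_i(b_i) = 1 and θ_i(b_j) = 0 for all other rays ρ_j ⊆ τ. Then the assignment y^{b_i} ↦ y^{b̃_i} for ρ_i ⊆ link(τ), y^{b_i} ↦ −Σ_{j=1}^ℓ θ_i(b_j) y^{b̃_j} for ρ_i ⊆ τ, and y^{b_i} ↦ 0 otherwise, defines a surjective ring homomorphism S_Σ → S_{Σ/τ}. -/

import Mathlib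

/-- The (simplicial) cone in `V` spanned by the rays `w i`, `i ∈ S`. -/
def coneOf {V : Type} [AddCommGroup V] [Module ℚ V] {n : ℕ}
    (w : Fin n → V) (S : Finset (Fin n)) : Set V :=
  {x | ∃ q : Fin n → ℚ, (∀ i, 0 ≤ q i) ∧ (∀ i, i ∉ S → q i = 0) ∧
    x = ∑ i, q i • w i}

/-- The Stanley-Reisner ideal of the simplicial complex with faces `Δ`. -/
noncomputable def srIdeal {n : ℕ} (Δ : Finset (Finset (Fin n))) :
    Ideal (MvPolynomial (Fin n) ℚ) :=
  Ideal.span {p | ∃ S : Finset (Fin n), S ∉ Δ ∧ p = ∏ i ∈ S, MvPolynomial.X i}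

/-- The rays of the link of the cone `τ`: those rays `ρ_i` with `ρ_i ∩ τ = 0` and
`ρ_i + τ ∈ Σ`. -/
def linkRays {n : ℕ} (Δ : Finset (Finset (Fin n))) (τ : Finset (Fin n)) :
    Finset (Fin n) :=
  Finset.univ.filter fun i => i ∉ τ ∧ insert i τ ∈ Δ

/-- The Stanley-Reisner ideal of the quotient fan `Σ/τ` (whose cones are indexed by
the faces of the link of `τ`), in the polynomial ring on the rays of the link. -/
noncomputable def srIdealLink {n : ℕ} (Δ : Finset (Finset (Fin n)))
    (τ : Finset (Fin n)) : Ideal (MvPolynomial {i // i ∈ linkRays Δ τ} ℚ) :=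
  Ideal.span {p | ∃ S : Finset {i // i ∈ linkRays Δ τ},
    (S.image (fun j => j.1) ∪ τ) ∉ Δ ∧ p = ∏ j ∈ S, MvPolynomial.X j}

/-- **The surjection `S_Σ → S_{Σ/τ}`.**  Let `Σ` be a complete simplicial stacky fan
with rays `b_i ∈ N`, `w i = bar (b i)`, and let `τ ∈ Δ` be a cone.  Suppose that for
each ray `i ∈ τ` an element `θ_i ∈ N⋆` is chosen with `θ_i(b_i) = 1` and
`θ_i(b_j) = 0` for the other rays `j ∈ τ`.  Then (in Stanley-Reisner presentations of
`S_Σ` and `S_{Σ/τ}`) the assignment `y^{b_i} ↦ y^{b̃_i}` for `i` in the link of `τ`,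
`y^{b_i} ↦ −∑_{j ∈ link} θ_i(b_j) y^{b̃_j}` for `i ∈ τ`, and `y^{b_i} ↦ 0` otherwise,
defines a surjective homomorphism of `ℚ`-algebras `S_Σ → S_{Σ/τ}`. -/
theorem stmt_16 (N V : Type) [AddCommGroup N] [AddCommGroup V] [Module ℚ V]
    (n : ℕ) (bar : N →+ V) (b : Fin n → N) (w : Fin n → V)
    (hw : w = fun i => bar (b i))
    (Δ : Finset (Finset (Fin n)))
    (hind : ∀ S ∈ Δ, LinearIndependent ℚ fun i : S => w i.1)
    (hdown : ∀ S ∈ Δ, ∀ T ⊆ S, T ∈ Δ)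
    (hglue : ∀ S ∈ Δ, ∀ T ∈ Δ, coneOf w S ∩ coneOf w T = coneOf w (S ∩ T))
    (hcomplete : ∀ x : V, ∃ S ∈ Δ, x ∈ coneOf w S)
    (τ : Finset (Fin n)) (hτ : τ ∈ Δ)
    (θ : Fin n → (N →+ ℤ))
    (hθ : ∀ i ∈ τ, θ i (b i) = 1 ∧ ∀ j ∈ τ, j ≠ i → θ i (b j) = 0) :
    ∃ f : (MvPolynomial (Fin n) ℚ ⧸ srIdeal Δ) →ₐ[ℚ]
        (MvPolynomial {i // i ∈ linkRays Δ τ} ℚ ⧸ srIdealLink Δ τ),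
      Function.Surjective ⇑f ∧
      (∀ i (h : i ∈ linkRays Δ τ),
        f (Ideal.Quotient.mk _ (MvPolynomial.X i)) =
          Ideal.Quotient.mk _ (MvPolynomial.X ⟨i, h⟩)) ∧
      (∀ i ∈ τ,
        f (Ideal.Quotient.mk _ (MvPolynomial.X i)) =
          - ∑ j ∈ (linkRays Δ τ).attach,
              ((θ i (b j.1) : ℚ)) •
                Ideal.Quotient.mk (srIdealLink Δ τ) (MvPolynomial.X j)) ∧
      (∀ i, i ∉ τ → i ∉ linkRays Δ τ →
        f (Ideal.Quotient.mk _ (MvPolynomial.X i)) = 0) := by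
  classical
  set L := linkRays Δ τ with hL
  set I := srIdealLink Δ τ with hI
  set g : Fin n → MvPolynomial {i // i ∈ L} ℚ := fun i =>
    if h : i ∈ L then MvPolynomial.X ⟨i, h⟩
    else if i ∈ τ then
      - ∑ j ∈ L.attach, ((θ i (b j.1) : ℚ)) • MvPolynomial.X j
    else 0 with hg
  set φ : MvPolynomial (Fin n) ℚ →ₐ[ℚ] (MvPolynomial {i // i ∈ L} ℚ ⧸ I) :=
    (Ideal.Quotient.mkₐ ℚ I).comp (MvPolynomial.aeval g) with hφ
  have hdisj : ∀ i ∈ τ, i ∉ L := by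
    intro i hi hiL
    simp only [hL, linkRays, Finset.mem_filter] at hiL
    exact hiL.2.1 hi
  have hker : ∀ p ∈ srIdeal Δ, φ p = 0 := by
    intro p hp
    rw [srIdeal] at hp
    refine Submodule.span_induction ?_ ?_ ?_ ?_ hp
    · rintro q ⟨S, hS, rfl⟩
      by_cases hsub : ∀ i ∈ S, i ∈ τ ∨ i ∈ L
      · set T : Finset {i // i ∈ L} := L.attach.filter (fun j => j.1 ∈ S) with hT
        have hTim : T.image (fun j => j.1) = S.filter (fun i => i ∈ L) := by
          ext i
          simp [hT, Finset.mem_image, Finset.mem_filter, and_comm]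
        have hgen : ((T.image (fun j => j.1)) ∪ τ) ∉ Δ := by
          intro hmem
          refine hS (hdown _ hmem S ?_)
          intro i hi
          rcases hsub i hi with h | h
          · exact Finset.mem_union_right _ h
          · refine Finset.mem_union_left _ ?_
            rw [hTim]; exact Finset.mem_filter.mpr ⟨hi, h⟩
        have hprodT : (∏ j ∈ T, (MvPolynomial.X j : MvPolynomial {i // i ∈ L} ℚ)) ∈ I := by
          rw [hI, srIdealLink]
          exact Ideal.subset_span ⟨T, hgen, rfl⟩
        have hsplit : (MvPolynomial.aeval g)
              (∏ i ∈ S, (MvPolynomial.X i : MvPolynomial (Fin n) ℚ))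
            = (∏ j ∈ T, (MvPolynomial.X j : MvPolynomial {i // i ∈ L} ℚ))
              * ∏ i ∈ S.filter (fun i => i ∉ L), g i := by
          simp only [map_prod, MvPolynomial.aeval_X]
          rw [← Finset.prod_filter_mul_prod_filter_not S (fun i => i ∈ L)]
          congr 1
          rw [← hTim, Finset.prod_image (fun a _ c _ h => Subtype.ext h)]
          refine Finset.prod_congr rfl fun j _ => ?_
          simp [hg, j.2]
        have hmem : (MvPolynomial.aeval g)
            (∏ i ∈ S, (MvPolynomial.X i : MvPolynomial (Fin n) ℚ)) ∈ I := by
          rw [hsplit]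
          exact Ideal.mul_mem_right _ _ hprodT
        simp only [hφ, AlgHom.comp_apply, Ideal.Quotient.mkₐ_eq_mk,
          Ideal.Quotient.eq_zero_iff_mem]
        exact hmem
      · push_neg at hsub
        obtain ⟨i, hiS, hiτ, hiL⟩ := hsub
        have hgi : g i = 0 := by simp [hg, hiL, hiτ]
        have h0 : (MvPolynomial.aeval g)
            (∏ i ∈ S, (MvPolynomial.X i : MvPolynomial (Fin n) ℚ)) = 0 := by
          rw [map_prod]
          exact Finset.prod_eq_zero hiS (by simp [hgi])
        rw [hφ, AlgHom.comp_apply, h0, map_zero]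
    · simp
    · intro x y _ _ hx hy; simp [map_add, hx, hy]
    · intro c x _ hx; simp [hx]
  have hfmk : ∀ q : MvPolynomial (Fin n) ℚ,
      (Ideal.Quotient.liftₐ (srIdeal Δ) φ hker) (Ideal.Quotient.mk _ q) = φ q := by
    intro q
    rw [Ideal.Quotient.liftₐ_apply]
    rfl
  refine ⟨Ideal.Quotient.liftₐ (srIdeal Δ) φ hker, ?_, ?_, ?_, ?_⟩
  · intro y
    obtain ⟨p, rfl⟩ := Ideal.Quotient.mk_surjective y
    refine ⟨Ideal.Quotient.mk _ ((MvPolynomial.aeval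
      (fun j : {i // i ∈ L} => (MvPolynomial.X j.1 : MvPolynomial (Fin n) ℚ))) p), ?_⟩
    rw [hfmk]
    have hcompid : (MvPolynomial.aeval g).comp (MvPolynomial.aeval
        (fun j : {i // i ∈ L} => (MvPolynomial.X j.1 : MvPolynomial (Fin n) ℚ)))
        = AlgHom.id ℚ _ := by
      apply MvPolynomial.algHom_ext
      intro j
      simp [hg, j.2]
    have h2 := congrArg (fun ψ => ψ p) hcompid
    simp only [AlgHom.comp_apply, AlgHom.id_apply] at h2
    rw [hφ, AlgHom.comp_apply, h2, Ideal.Quotient.mkₐ_eq_mk]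
  · intro i h
    rw [hfmk, hφ, AlgHom.comp_apply, MvPolynomial.aeval_X]
    simp [hg, show i ∈ L from h]
  · intro i hi
    rw [hfmk, hφ, AlgHom.comp_apply, MvPolynomial.aeval_X]
    have h2 : g i = - ∑ j ∈ L.attach, ((θ i (b j.1) : ℚ)) • MvPolynomial.X j := by
      simp [hg, dif_neg (hdisj i hi), if_pos hi]
    rw [h2, map_neg, map_sum]
    congr 1
  · intro i hiτ hiL
    rw [hfmk, hφ, AlgHom.comp_apply, MvPolynomial.aeval_X]
    have h2 : g i = 0 := by simp [hg, show i ∉ L from hiL, hiτ]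
    rw [h2, map_zero]
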